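/- arXiv:1910.01958 — 3 statements merged into one kernel-verified Lean document; each statement's English description precedes it below -/
import Mathlib

section
/- Let R > 1 and let A(R) = {z ∈ ℂ : 1/R < |z| < R} with closure cl(A(R)) = {z ∈ ℂ : 1/R ≤ |z| ≤ R}. Let L, M, N : ℂ → ℝ be continuous on cl(A(R)) and suppose: (i) N(z) + |z|²·L(z) = 0 for all z ∈ cl(A(R)); (ii) M(z) = 0 whenever |z| = R or |z| = 1/R; (iii) the function F(z) = ((|z|²·L(z) − N(z)) − 2i·|z|·M(z))² is continuous on cl(A(R)) and holomorphic on A(R); (iv) L is not identically zero on cl(A(R)). Then there exists a constant A₀ > 0 such that M(z) = 0 for all z ∈ cl(A(R)), and either N(z) = A₀ and L(z) = −A₀/|z|² for all z ∈ cl(A(R)), or N(z) = −A₀ and L(z) = A₀/|z|² for all z ∈ cl(A(R)). -/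
open Complex Set Filter Topology

lemma aux_sq_im (x c m : ℝ) :
    ((((x:ℝ):ℂ) - 2*Complex.I*(c:ℂ)*(m:ℂ))^2).im = -(4*x*c*m) := by
  simp [pow_two, Complex.mul_im]
  ring

lemma aux_sq_re (x c m : ℝ) :
    ((((x:ℝ):ℂ) - 2*Complex.I*(c:ℂ)*(m:ℂ))^2).re = x^2 - 4*c^2*m^2 := by
  simp [pow_two, Complex.mul_re]
  ring

lemma ann_open {R : ℝ} : IsOpen {z : ℂ | 1 / R < ‖z‖ ∧ ‖z‖ < R} :=
  isOpen_Ioo.preimage continuous_norm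

lemma ann_closed {R : ℝ} : IsClosed {z : ℂ | 1 / R ≤ ‖z‖ ∧ ‖z‖ ≤ R} :=
  isClosed_Icc.preimage continuous_norm

lemma ann_closure {R : ℝ} (hR : 1 < R) :
    closure {z : ℂ | 1 / R < ‖z‖ ∧ ‖z‖ < R}
      = {z : ℂ | 1 / R ≤ ‖z‖ ∧ ‖z‖ ≤ R} := by
  have hR0 : 0 < R := lt_trans one_pos hR
  have hinv : 0 < 1/R := by positivity
  have hR2 : (1:ℝ) < R^2 := one_lt_pow₀ hR (by norm_num)
  have hinv2 : 1/R^2 < 1 := (div_lt_one (by positivity)).mpr hR2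
  apply Subset.antisymm
  · exact closure_minimal (fun z hz => ⟨hz.1.le, hz.2.le⟩) ann_closed
  · intro z hz
    have htend : ∀ l : Filter ℝ, l ≤ 𝓝 1 →
        Tendsto (fun t : ℝ => (t:ℂ) * z) l (𝓝 z) := by
      intro l hl
      have : Tendsto (fun t : ℝ => (t:ℂ) * z) (𝓝 (1:ℝ)) (𝓝 ((1:ℂ) * z)) :=
        ((Complex.continuous_ofReal.mul continuous_const).tendsto 1)
      simpa using this.mono_left hl
    rcases lt_or_eq_of_le hz.1 with h1 | h1
    · rcases lt_or_eq_of_le hz.2 with h2 | h2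
      · exact subset_closure ⟨h1, h2⟩
      · refine mem_closure_of_tendsto (htend (𝓝[<] (1:ℝ)) nhdsWithin_le_nhds) ?_
        filter_upwards [Ioo_mem_nhdsLT_of_mem (Set.mem_Ioc.mpr ⟨hinv2, le_refl 1⟩)] with t ht
        have ht0 : 0 < t := lt_trans (by positivity) ht.1
        have habs : ‖(t:ℂ) * z‖ = t * R := by
          rw [norm_mul, Complex.norm_real, Real.norm_eq_abs, abs_of_pos ht0, ← h2]
        constructor
        · rw [habs]
          calc 1/R = (1/R^2) * R := by field_simp
          _ < t * R := by apply mul_lt_mul_of_pos_right ht.1 hR0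
        · rw [habs]
          calc t * R < 1 * R := mul_lt_mul_of_pos_right ht.2 hR0
          _ = R := one_mul R
    · refine mem_closure_of_tendsto (htend (𝓝[>] (1:ℝ)) nhdsWithin_le_nhds) ?_
      filter_upwards [Ioo_mem_nhdsGT_of_mem (Set.mem_Ico.mpr ⟨le_refl 1, hR2⟩)] with t ht
      have ht0 : (0:ℝ) < t := lt_trans one_pos ht.1
      have habs : ‖(t:ℂ) * z‖ = t * (1/R) := by
        rw [norm_mul, Complex.norm_real, Real.norm_eq_abs, abs_of_pos ht0, ← h1]
      constructor
      · rw [habs]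
        calc 1/R = 1 * (1/R) := (one_mul _).symm
        _ < t * (1/R) := mul_lt_mul_of_pos_right ht.1 hinv
      · rw [habs]
        calc t * (1/R) < R^2 * (1/R) := mul_lt_mul_of_pos_right ht.2 hinv
        _ = R := by field_simp

lemma ann_polar (s : Set ℝ) (hpos : ∀ r ∈ s, 0 < r) :
    (fun p : ℝ × ℝ => (p.1 : ℂ) * Complex.exp (p.2 * Complex.I)) '' (s ×ˢ univ)
      = {z : ℂ | ‖z‖ ∈ s} := by
  ext z
  constructor
  · rintro ⟨⟨r, θ⟩, ⟨hr, -⟩, rfl⟩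
    have : ‖(r:ℂ) * Complex.exp (θ * Complex.I)‖ = r := by
      rw [norm_mul, Complex.norm_real, Real.norm_eq_abs, Complex.norm_exp_ofReal_mul_I, mul_one,
        abs_of_pos (hpos r hr)]
    simpa [this, abs_of_pos (hpos r hr)] using hr
  · intro hz
    exact ⟨⟨‖z‖, Complex.arg z⟩, ⟨hz, mem_univ _⟩,
      Complex.norm_mul_exp_arg_mul_I z⟩

lemma ann_preconn (s : Set ℝ) (hs : IsPreconnected s) (hpos : ∀ r ∈ s, 0 < r) :
    IsPreconnected {z : ℂ | ‖z‖ ∈ s} := by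
  rw [← ann_polar s hpos]
  apply (hs.prod isPreconnected_univ).image
  apply Continuous.continuousOn
  exact (Complex.continuous_ofReal.comp continuous_fst).mul
    (((Complex.continuous_ofReal.comp continuous_snd).mul continuous_const).cexp)

/-- Lemma 1 of the paper, analytic content. `L, M, N` are the coefficients
of the second fundamental form of a free boundary minimal annulus: minimality gives
`N + |z|²L = 0`, the free boundary condition gives `M = 0` on the boundary circles, and
`((|z|²L − N) − 2i|z|M)²` is holomorphic. Then `M ≡ 0` and, up to the choice of unit normal,
`N = A₀` and `L = −A₀/|z|²` for a positive constant `A₀`. -/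
theorem stmt_1 (R : ℝ) (hR : 1 < R) (L M N : ℂ → ℝ)
    (hLc : ContinuousOn L {z : ℂ | 1 / R ≤ ‖z‖ ∧ ‖z‖ ≤ R})
    (hMc : ContinuousOn M {z : ℂ | 1 / R ≤ ‖z‖ ∧ ‖z‖ ≤ R})
    (hNc : ContinuousOn N {z : ℂ | 1 / R ≤ ‖z‖ ∧ ‖z‖ ≤ R})
    (hmin : ∀ z ∈ {z : ℂ | 1 / R ≤ ‖z‖ ∧ ‖z‖ ≤ R},
      N z + (‖z‖) ^ 2 * L z = 0)
    (hbdry : ∀ z : ℂ, (‖z‖ = R ∨ ‖z‖ = 1 / R) → M z = 0)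
    (hFc : ContinuousOn
      (fun z : ℂ => ((((‖z‖) ^ 2 * L z - N z : ℝ) : ℂ)
        - 2 * Complex.I * (‖z‖ : ℂ) * (M z : ℂ)) ^ 2)
      {z : ℂ | 1 / R ≤ ‖z‖ ∧ ‖z‖ ≤ R})
    (hFd : DifferentiableOn ℂ
      (fun z : ℂ => ((((‖z‖) ^ 2 * L z - N z : ℝ) : ℂ)
        - 2 * Complex.I * (‖z‖ : ℂ) * (M z : ℂ)) ^ 2)
      {z : ℂ | 1 / R < ‖z‖ ∧ ‖z‖ < R})
    (hLne : ∃ z ∈ {z : ℂ | 1 / R ≤ ‖z‖ ∧ ‖z‖ ≤ R}, L z ≠ 0) :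
    ∃ A₀ : ℝ, 0 < A₀ ∧
      (∀ z ∈ {z : ℂ | 1 / R ≤ ‖z‖ ∧ ‖z‖ ≤ R}, M z = 0) ∧
      ((∀ z ∈ {z : ℂ | 1 / R ≤ ‖z‖ ∧ ‖z‖ ≤ R},
          N z = A₀ ∧ L z = -A₀ / (‖z‖) ^ 2) ∨
       (∀ z ∈ {z : ℂ | 1 / R ≤ ‖z‖ ∧ ‖z‖ ≤ R},
          N z = -A₀ ∧ L z = A₀ / (‖z‖) ^ 2)) := by
  set F : ℂ → ℂ := fun z : ℂ => ((((‖z‖) ^ 2 * L z - N z : ℝ) : ℂ)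
        - 2 * Complex.I * (‖z‖ : ℂ) * (M z : ℂ)) ^ 2 with hF
  set S := {z : ℂ | 1 / R ≤ ‖z‖ ∧ ‖z‖ ≤ R} with hSdef
  set U := {z : ℂ | 1 / R < ‖z‖ ∧ ‖z‖ < R} with hUdef
  have hR0 : 0 < R := lt_trans one_pos hR
  have hinv : 0 < 1/R := by positivity
  have hinv1 : 1/R < 1 := (div_lt_one hR0).mpr hR
  have hUS : U ⊆ S := fun z hz => ⟨hz.1.le, hz.2.le⟩
  have hclU : closure U = S := ann_closure hR
  have habs_pos : ∀ z ∈ S, 0 < ‖z‖ := fun z hz => lt_of_lt_of_le hinv hz.1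
  -- F's imaginary part and real part
  have hFim : ∀ z, (F z).im =
      -(4 * ((‖z‖)^2 * L z - N z) * (‖z‖) * (M z)) := fun z =>
    aux_sq_im _ _ _
  have hFre : ∀ z, (F z).re =
      ((‖z‖)^2 * L z - N z)^2 - 4 * (‖z‖)^2 * (M z)^2 := fun z =>
    aux_sq_re _ _ _
  -- boundary: Im F = 0 on frontier
  have hfront : frontier U ⊆ {z : ℂ | ‖z‖ = R ∨ ‖z‖ = 1/R} := by
    intro z hz
    rw [frontier, hclU, ann_open.interior_eq] at hz
    rcases hz with ⟨⟨h1, h2⟩, hnot⟩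
    rcases eq_or_lt_of_le h1 with h1' | h1'
    · exact Or.inr h1'.symm
    · rcases eq_or_lt_of_le h2 with h2' | h2'
      · exact Or.inl h2'
      · exact absurd ⟨h1', h2'⟩ hnot
  have hfrontIm : ∀ z ∈ frontier U, (F z).im = 0 := by
    intro z hz
    have hM : M z = 0 := hbdry z (hfront hz)
    rw [hFim, hM]; ring
  -- bounded
  have hUb : Bornology.IsBounded U := by
    apply (Metric.isBounded_ball (x := (0:ℂ)) (r := R + 1)).subset
    intro z hz
    simp only [Metric.mem_ball, Complex.dist_eq, sub_zero]
    exact lt_trans hz.2 (lt_add_one R)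
  -- max modulus: Im F = 0 on S
  have hImF : ∀ z ∈ S, (F z).im = 0 := by
    have hd1 : DiffContOnCl ℂ (fun z => Complex.exp (Complex.I * F z)) U :=
      ⟨((hFd.const_mul Complex.I).cexp), by
        rw [hclU]
        exact ((continuousOn_const.mul hFc).cexp)⟩
    have hd2 : DiffContOnCl ℂ (fun z => Complex.exp (-(Complex.I * F z))) U :=
      ⟨(((hFd.const_mul Complex.I).neg).cexp), by
        rw [hclU]
        exact (((continuousOn_const.mul hFc).neg).cexp)⟩
    intro z hz
    have hz' : z ∈ closure U := by rw [hclU]; exact hz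
    have h1 : ‖Complex.exp (Complex.I * F z)‖ ≤ 1 := by
      apply Complex.norm_le_of_forall_mem_frontier_norm_le hUb hd1 _ hz'
      intro w hw
      rw [Complex.norm_exp]
      have : (Complex.I * F w).re = -(F w).im := by simp [Complex.mul_re]
      rw [this, hfrontIm w hw]
      simp
    have h2 : ‖Complex.exp (-(Complex.I * F z))‖ ≤ 1 := by
      apply Complex.norm_le_of_forall_mem_frontier_norm_le hUb hd2 _ hz'
      intro w hw
      rw [Complex.norm_exp]
      have : (-(Complex.I * F w)).re = (F w).im := by simp [Complex.mul_re]
      rw [this, hfrontIm w hw]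
      simp
    rw [Complex.norm_exp] at h1 h2
    have e1 : (Complex.I * F z).re = -(F z).im := by simp [Complex.mul_re]
    have e2 : (-(Complex.I * F z)).re = (F z).im := by simp [Complex.mul_re]
    rw [e1] at h1; rw [e2] at h2
    have h1' : -(F z).im ≤ 0 := by
      by_contra h; push_neg at h
      exact absurd h1 (not_le.mpr (by calc (1:ℝ) = Real.exp 0 := Real.exp_zero.symm
        _ < Real.exp (-(F z).im) := Real.exp_lt_exp.mpr h))
    have h2' : (F z).im ≤ 0 := by
      by_contra h; push_neg at h
      exact absurd h2 (not_le.mpr (by calc (1:ℝ) = Real.exp 0 := Real.exp_zero.symm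
        _ < Real.exp ((F z).im) := Real.exp_lt_exp.mpr h))
    linarith
  -- F is constant on U
  have hUconn : IsPreconnected U := by
    have : U = {z : ℂ | ‖z‖ ∈ Ioo (1/R) R} := rfl
    rw [this]
    exact ann_preconn _ isPreconnected_Ioo (fun r hr => lt_trans hinv hr.1)
  have hUne : ((((R + 1/R)/2 : ℝ)) : ℂ) ∈ U := by
    constructor
    · simp only [Set.mem_setOf_eq, Complex.norm_real, Real.norm_eq_abs]
      rw [abs_of_pos (by positivity)]
      linarith
    · simp only [Set.mem_setOf_eq, Complex.norm_real, Real.norm_eq_abs]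
      rw [abs_of_pos (by positivity)]
      linarith
  have hconst : ∃ w : ℂ, ∀ z ∈ U, F z = w := by
    have hana : AnalyticOnNhd ℂ F U := hFd.analyticOnNhd ann_open
    rcases hana.is_constant_or_isOpen hUconn with h | h
    · exact h
    · exfalso
      have hopen : IsOpen (F '' U) := h U (subset_refl U) ann_open
      have hmem : F (((R + 1/R)/2 : ℝ) : ℂ) ∈ F '' U := ⟨_, hUne, rfl⟩
      rcases Metric.isOpen_iff.mp hopen _ hmem with ⟨ε, hε, hball⟩
      have hmem2 : F (((R + 1/R)/2 : ℝ) : ℂ) + ((ε/2 : ℝ) : ℂ) * Complex.I ∈ F '' U := by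
        apply hball
        simp only [Metric.mem_ball, Complex.dist_eq, add_sub_cancel_left]
        rw [norm_mul, Complex.norm_I, mul_one, Complex.norm_real, Real.norm_eq_abs, abs_of_pos (by positivity)]
        linarith
      rcases hmem2 with ⟨y, hy, hy2⟩
      have him1 : (F y).im = 0 := hImF y (hUS hy)
      have him2 : (F (((R + 1/R)/2 : ℝ) : ℂ)).im = 0 := hImF _ (hUS hUne)
      have : (F y).im = (F (((R + 1/R)/2 : ℝ) : ℂ)).im + ε/2 := by
        rw [hy2]; simp
      rw [him1, him2] at this
      linarith
  obtain ⟨w, hw⟩ := hconst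
  -- F = w on S by continuity
  have hwS : ∀ z ∈ S, F z = w := by
    intro z hz
    have hz' : z ∈ closure U := by rw [hclU]; exact hz
    have hne : (𝓝[U] z).NeBot := mem_closure_iff_nhdsWithin_neBot.mp hz'
    have h1 : Tendsto F (𝓝[U] z) (𝓝 (F z)) :=
      ((hFc z hz).mono hUS)
    have h2 : Tendsto F (𝓝[U] z) (𝓝 w) := by
      apply Tendsto.congr' _ tendsto_const_nhds
      filter_upwards [eventually_mem_nhdsWithin] with y hy
      exact (hw y hy).symm
    exact tendsto_nhds_unique h1 h2
  -- algebraic consequences on S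
  have key : ∀ z ∈ S, N z * M z = 0 ∧ 4 * (N z)^2 - 4 * (‖z‖)^2 * (M z)^2 = w.re := by
    intro z hz
    have hx : (‖z‖)^2 * L z - N z = -2 * N z := by
      have := hmin z hz; linarith
    have him := hImF z hz
    rw [hFim z, hx] at him
    have hre : (F z).re = w.re := by rw [hwS z hz]
    rw [hFre z, hx] at hre
    have ha := habs_pos z hz
    constructor
    · have h8 : ‖z‖ * (N z * M z) = 0 := by linear_combination him / 8
      rcases mul_eq_zero.mp h8 with h | h
      · exact absurd h (ne_of_gt ha)
      · exact h
    · linear_combination hre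
  obtain ⟨z₀, hz₀, hL0⟩ := hLne
  have hN0 : N z₀ ≠ 0 := by
    intro h
    have hmz := hmin z₀ hz₀
    rw [h, zero_add] at hmz
    rcases mul_eq_zero.mp hmz with h' | h'
    · exact absurd h' (pow_ne_zero _ (ne_of_gt (habs_pos z₀ hz₀)))
    · exact hL0 h'
  have hM0 : M z₀ = 0 := by
    rcases mul_eq_zero.mp (key z₀ hz₀).1 with h | h
    · exact absurd h hN0
    · exact h
  have hwre : w.re = 4 * (N z₀)^2 := by
    have hk := (key z₀ hz₀).2
    rw [hM0] at hk
    linear_combination -1 * hk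
  have hwpos : 0 < w.re := by
    rw [hwre]
    have hN2 : 0 < N z₀ ^ 2 := pow_two_pos_of_ne_zero hN0
    linarith
  set A₀ := Real.sqrt w.re / 2 with hA₀def
  have hA0 : 0 < A₀ := div_pos (Real.sqrt_pos.mpr hwpos) two_pos
  have hA2 : 4 * A₀^2 = w.re := by
    rw [hA₀def, div_pow, Real.sq_sqrt hwpos.le]; ring
  have hMall : ∀ z ∈ S, M z = 0 := by
    intro z hz
    by_contra hMz
    have hNz : N z = 0 := by
      rcases mul_eq_zero.mp (key z hz).1 with h | h
      · exact h
      · exact absurd h hMz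
    have hk := (key z hz).2
    rw [hNz] at hk
    have ha := habs_pos z hz
    have hp : 0 < 4 * (‖z‖)^2 * (M z)^2 :=
      mul_pos (by positivity) (pow_two_pos_of_ne_zero hMz)
    nlinarith
  have hNsq : ∀ z ∈ S, N z = A₀ ∨ N z = -A₀ := by
    intro z hz
    have h2 := (key z hz).2
    rw [hMall z hz] at h2
    have hsq : (N z)^2 = A₀^2 := by linear_combination (h2 - hA2) / 4
    have hfac : (N z - A₀) * (N z + A₀) = 0 := by linear_combination hsq
    rcases mul_eq_zero.mp hfac with h | h
    · left; linarith
    · right; linarith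
  have hSconn : IsPreconnected S := by
    have hSS : S = {z : ℂ | ‖z‖ ∈ Set.Icc (1/R) R} := rfl
    rw [hSS]
    exact ann_preconn _ isPreconnected_Icc (fun r hr => lt_of_lt_of_le hinv hr.1)
  have hdich : (∀ z ∈ S, N z = A₀) ∨ (∀ z ∈ S, N z = -A₀) := by
    by_contra hcon
    push_neg at hcon
    obtain ⟨⟨z₁, hz₁, hN1⟩, ⟨z₂, hz₂, hN2⟩⟩ := hcon
    have hN1' : N z₁ = -A₀ := (hNsq z₁ hz₁).resolve_left hN1
    have hN2' : N z₂ = A₀ := (hNsq z₂ hz₂).resolve_right hN2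
    have himg : IsPreconnected (N '' S) := hSconn.image N hNc
    have h0 : (0:ℝ) ∈ Set.Icc (-A₀) A₀ := ⟨by linarith, by linarith⟩
    have hsub := himg.Icc_subset ⟨z₁, hz₁, hN1'⟩ ⟨z₂, hz₂, hN2'⟩
    obtain ⟨z₃, hz₃, hN3⟩ := hsub h0
    rcases hNsq z₃ hz₃ with h | h <;> rw [hN3] at h <;> linarith
  refine ⟨A₀, hA0, hMall, ?_⟩
  rcases hdich with h | h
  · left
    intro z hz
    refine ⟨h z hz, ?_⟩
    have hm := hmin z hz
    rw [h z hz] at hm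
    have ha' : ‖z‖ ≠ 0 := ne_of_gt (habs_pos z hz)
    field_simp
    linarith
  · right
    intro z hz
    refine ⟨h z hz, ?_⟩
    have hm := hmin z hz
    rw [h z hz] at hm
    have ha' : ‖z‖ ≠ 0 := ne_of_gt (habs_pos z hz)
    field_simp
    linarith
end

section
/- There exists a unique real number t with t > 1 such that t² + 1 = (t² − 1)·ln t. -/
noncomputable def gAux : ℝ → ℝ := fun t => Real.log t - 1 - 2 / (t ^ 2 - 1)

lemma gAux_strictMonoOn : StrictMonoOn gAux (Set.Ioi 1) := by
  intro a ha b hb hab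
  simp only [Set.mem_Ioi] at ha hb
  have ha1 : (0:ℝ) < a ^ 2 - 1 := by nlinarith
  have hb1 : (0:ℝ) < b ^ 2 - 1 := by nlinarith
  have hlog : Real.log a < Real.log b := Real.log_lt_log (by linarith) hab
  have hdiv : 2 / (b ^ 2 - 1) < 2 / (a ^ 2 - 1) := by
    apply div_lt_div_of_pos_left (by norm_num) ha1
    nlinarith
  unfold gAux
  linarith

lemma gAux_eq_zero_iff {t : ℝ} (ht : 1 < t) :
    (t ^ 2 + 1 = (t ^ 2 - 1) * Real.log t) ↔ gAux t = 0 := by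
  have h : (0:ℝ) < t ^ 2 - 1 := by nlinarith
  unfold gAux
  rw [sub_eq_zero]
  constructor
  · intro heq
    field_simp
    nlinarith [heq]
  · intro heq
    field_simp at heq
    nlinarith [heq]

/-- There is a unique real `t > 1` with `t² + 1 = (t² − 1)·ln t`.
This equation determines the outer conformal radius of the critical catenoid. -/
theorem stmt_4 : ∃! t : ℝ, 1 < t ∧ t ^ 2 + 1 = (t ^ 2 - 1) * Real.log t := by
  have hexp : (3:ℝ) ≤ Real.exp 2 := by
    have := Real.add_one_le_exp (2:ℝ)
    linarith
  have h2e : (2:ℝ) ≤ Real.exp 2 := by linarith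
  -- continuity of gAux on [2, exp 2]
  have hcont : ContinuousOn gAux (Set.Icc 2 (Real.exp 2)) := by
    apply ContinuousOn.sub
    · apply ContinuousOn.sub
      · apply Real.continuousOn_log.mono
        intro x hx
        simp only [Set.mem_Icc] at hx
        simp only [Set.mem_compl_iff, Set.mem_singleton_iff]
        intro h; rw [h] at hx; linarith [hx.1]
      · exact continuousOn_const
    · apply ContinuousOn.div continuousOn_const
      · exact (continuousOn_pow 2).sub continuousOn_const
      · intro x hx
        simp only [Set.mem_Icc] at hx
        nlinarith [hx.1]
  have hg2 : gAux 2 ≤ 0 := by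
    have : Real.log 2 ≤ 1 := by
      have := Real.log_le_sub_one_of_pos (by norm_num : (0:ℝ) < 2)
      linarith
    unfold gAux
    norm_num
    linarith
  have hge : 0 ≤ gAux (Real.exp 2) := by
    unfold gAux
    rw [Real.log_exp]
    have h9 : (9:ℝ) ≤ (Real.exp 2) ^ 2 := by nlinarith
    have h8 : (8:ℝ) ≤ (Real.exp 2) ^ 2 - 1 := by linarith
    have : 2 / ((Real.exp 2) ^ 2 - 1) ≤ 2 / 8 := by
      apply div_le_div_of_nonneg_left (by norm_num) (by norm_num) h8
    linarith
  obtain ⟨t, ht_mem, ht0⟩ : ∃ t ∈ Set.Icc (2:ℝ) (Real.exp 2), gAux t = 0 := by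
    have := intermediate_value_Icc h2e hcont
    have h0 : (0:ℝ) ∈ Set.Icc (gAux 2) (gAux (Real.exp 2)) := ⟨hg2, hge⟩
    exact this h0
  have ht1 : 1 < t := by linarith [ht_mem.1]
  refine ⟨t, ⟨ht1, (gAux_eq_zero_iff ht1).mpr ht0⟩, ?_⟩
  rintro s ⟨hs1, hs⟩
  have hs0 : gAux s = 0 := (gAux_eq_zero_iff hs1).mp hs
  exact gAux_strictMonoOn.injOn (Set.mem_Ioi.mpr hs1) (Set.mem_Ioi.mpr ht1)
    (by rw [hs0, ht0])
end

section
/- Let U ⊆ ℂ be open and let g : ℂ → ℂ be holomorphic on U. Then the function φ(z) = ln(1 + |g(z)|²) is C² on U and its Laplacian satisfies Δφ(z) = 4·|g′(z)|² / (1 + |g(z)|²)² for every z ∈ U. -/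
/-- The Laplacian `Δu = ∂²u/∂x² + ∂²u/∂y²` of a function `u : ℂ → ℝ`, with `ℂ ≅ ℝ²`
via the basis `1, i`. -/
noncomputable def laplacian (u : ℂ → ℝ) (z : ℂ) : ℝ :=
  fderiv ℝ (fun w => fderiv ℝ u w 1) z 1 +
    fderiv ℝ (fun w => fderiv ℝ u w Complex.I) z Complex.I

/-- restricted-scalar derivative CLM of a complex-differentiable function -/
noncomputable def cderivCLM (c : ℂ) : ℂ →L[ℝ] ℂ :=
  ((1 : ℂ →L[ℂ] ℂ).smulRight c).restrictScalars ℝ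

@[simp] lemma cderivCLM_apply (c u : ℂ) : cderivCLM c u = u * c := by
  simp [cderivCLM, smul_eq_mul]

lemma hpos (g : ℂ → ℂ) (w : ℂ) : (0:ℝ) < 1 + Complex.normSq (g w) := by
  have := Complex.normSq_nonneg (g w); linarith

lemma hasFDerivAt_re_conj_mul {f h : ℂ → ℂ} {f' h' : ℂ →L[ℝ] ℂ} {w : ℂ}
    (hf : HasFDerivAt f f' w) (hh : HasFDerivAt h h' w) :
    HasFDerivAt (fun x => ((starRingEnd ℂ) (f x) * h x).re)
      (Complex.reCLM.comp ((starRingEnd ℂ) (f w) • h' + h w • (Complex.conjCLE.toContinuousLinearMap.comp f'))) w := by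
  have hcf : HasFDerivAt (fun x => (starRingEnd ℂ) (f x))
      (Complex.conjCLE.toContinuousLinearMap.comp f') w :=
    (Complex.conjCLE.toContinuousLinearMap.hasFDerivAt).comp w hf
  exact Complex.reCLM.hasFDerivAt.comp w (hcf.mul hh)

section
variable (U : Set ℂ) (hU : IsOpen U) (g : ℂ → ℂ) (hg : DifferentiableOn ℂ g U)
include hU hg

lemma hgR {w : ℂ} (hw : w ∈ U) : HasFDerivAt g (cderivCLM (deriv g w)) w := by
  have := (hg.differentiableAt (hU.mem_nhds hw)).hasDerivAt
  exact this.hasFDerivAt.restrictScalars ℝ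

-- derivative of w ↦ 1 + normSq (g w)
lemma hQ {w : ℂ} (hw : w ∈ U) :
    HasFDerivAt (fun x => 1 + Complex.normSq (g x))
      (Complex.reCLM.comp ((starRingEnd ℂ) (g w) • cderivCLM (deriv g w)
        + g w • (Complex.conjCLE.toContinuousLinearMap.comp (cderivCLM (deriv g w))))) w := by
  have h1 := (hasFDerivAt_re_conj_mul (hgR U hU g hg hw) (hgR U hU g hg hw)).const_add 1
  rw [show (fun x => 1 + Complex.normSq (g x)) = fun x => 1 + ((starRingEnd ℂ) (g x) * g x).re from
    funext fun x => by simp [Complex.normSq_apply, Complex.mul_re]]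
  exact h1

lemma hphi {w : ℂ} (hw : w ∈ U) :
    HasFDerivAt (fun x => Real.log (1 + Complex.normSq (g x)))
      ((1 + Complex.normSq (g w))⁻¹ •
        (Complex.reCLM.comp ((starRingEnd ℂ) (g w) • cderivCLM (deriv g w)
        + g w • (Complex.conjCLE.toContinuousLinearMap.comp (cderivCLM (deriv g w)))))) w := by
  have hl := Real.hasDerivAt_log (hpos g w).ne'
  exact hl.comp_hasFDerivAt w (hQ U hU g hg hw)

lemma firstDeriv {w : ℂ} (hw : w ∈ U) (v : ℂ) :
    fderiv ℝ (fun x => Real.log (1 + Complex.normSq (g x))) w v =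
      (1 + Complex.normSq (g w))⁻¹ * (2 * ((starRingEnd ℂ) (g w) * (deriv g w * v)).re) := by
  rw [(hphi U hU g hg hw).fderiv]
  simp [Complex.mul_re, Complex.mul_im]
  ring
end

section
variable (U : Set ℂ) (hU : IsOpen U) (g : ℂ → ℂ) (hg : DifferentiableOn ℂ g U)
include hU hg

lemma secondDeriv {z : ℂ} (hz : z ∈ U) (v : ℂ) :
    fderiv ℝ (fun w => fderiv ℝ (fun x => Real.log (1 + Complex.normSq (g x))) w v) z v =
      (1 + Complex.normSq (g z))⁻¹ *
        (2 * (((starRingEnd ℂ) (deriv g z * v) * (deriv g z * v)).re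
            + ((starRingEnd ℂ) (g z) * (deriv (deriv g) z * v * v)).re))
      - ((1 + Complex.normSq (g z))⁻¹)^2 *
          (2 * ((starRingEnd ℂ) (g z) * (deriv g z * v)).re)^2 := by
  have hev : (fun w => fderiv ℝ (fun x => Real.log (1 + Complex.normSq (g x))) w v)
      =ᶠ[nhds z] (fun w =>
        (1 + Complex.normSq (g w))⁻¹ * (2 * ((starRingEnd ℂ) (g w) * (deriv g w * v)).re)) := by
    filter_upwards [hU.mem_nhds hz] with w hw using firstDeriv U hU g hg hw v
  rw [hev.fderiv_eq]
  -- derivative of deriv g at z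
  have hAn := hg.analyticOnNhd hU
  have hc : HasFDerivAt (deriv g) (cderivCLM (deriv (deriv g) z)) z :=
    ((hAn.deriv z hz).differentiableAt.hasDerivAt).hasFDerivAt.restrictScalars ℝ
  have hh := hc.mul_const v
  have hB := (hasFDerivAt_re_conj_mul (hgR U hU g hg hz) hh).const_mul 2
  have hA := (hasDerivAt_inv (hpos g z).ne').comp_hasFDerivAt z (hQ U hU g hg hz)
  have hprod := hA.mul hB
  simp only [Function.comp_def, Pi.mul_def] at hprod
  rw [hprod.fderiv]
  simp [Complex.mul_re, Complex.mul_im, Complex.normSq_apply]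
  ring
end

/-- For `g` holomorphic on an open set `U ⊆ ℂ`, the function
`φ(z) = ln(1 + |g(z)|²)` is `C²` on `U` and satisfies
`Δφ = 4|g′|²/(1 + |g|²)²` on `U`. -/
theorem stmt_9 (U : Set ℂ) (hU : IsOpen U) (g : ℂ → ℂ)
    (hg : DifferentiableOn ℂ g U) :
    ContDiffOn ℝ 2 (fun z => Real.log (1 + ‖g z‖ ^ 2)) U ∧
      ∀ z ∈ U,
        laplacian (fun z => Real.log (1 + ‖g z‖ ^ 2)) z =
          4 * ‖deriv g z‖ ^ 2 / (1 + ‖g z‖ ^ 2) ^ 2 := by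

  have hfun : (fun z => Real.log (1 + ‖g z‖ ^ 2))
      = (fun z => Real.log (1 + Complex.normSq (g z))) := by
    funext z; rw [Complex.sq_norm]
  rw [hfun]
  constructor
  · have hgc : ContDiffOn ℝ 2 g U := (hg.contDiffOn hU).restrict_scalars ℝ
    have hn : ContDiff ℝ 2 Complex.normSq := by
      have h : (Complex.normSq : ℂ → ℝ) = fun z => z.re * z.re + z.im * z.im := by
        funext z; exact Complex.normSq_apply z
      rw [h]
      exact (Complex.reCLM.contDiff.mul Complex.reCLM.contDiff).add
        (Complex.imCLM.contDiff.mul Complex.imCLM.contDiff)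
    have h2 : ContDiffOn ℝ 2 (fun x => 1 + Complex.normSq (g x)) U :=
      contDiffOn_const.add (hn.comp_contDiffOn hgc)
    exact h2.log (fun x _ => (hpos g x).ne')
  · intro z hz
    have h1 := secondDeriv U hU g hg hz 1
    have hI := secondDeriv U hU g hg hz Complex.I
    unfold laplacian
    rw [h1, hI, Complex.sq_norm, Complex.sq_norm]
    have hD := (hpos g z).ne'
    field_simp
    simp only [Complex.mul_re, Complex.mul_im, Complex.normSq_apply, Complex.I_re, Complex.I_im,
      Complex.conj_re, Complex.conj_im, Complex.one_re, Complex.one_im,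
      Complex.I_sq, Complex.neg_re, Complex.neg_im]
    ring
end
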